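/- Let p be an odd prime and a ∈ F_p. Then there exists x ∈ F_p such that x² = a, or x² + 1 = a, or x² ≠ 1 and 1/(1 − x²) = a. -/

import Mathlib

theorem three_functions_cover (p : ℕ) [Fact p.Prime] (hp : p ≠ 2) (a : ZMod p) :
    ∃ x : ZMod p, x ^ 2 = a ∨ x ^ 2 + 1 = a ∨ (x ^ 2 ≠ 1 ∧ 1 / (1 - x ^ 2) = a) := by
  by_cases h1 : IsSquare a
  · obtain ⟨x, hx⟩ := h1
    exact ⟨x, Or.inl (by rw [sq]; exact hx.symm)⟩
  by_cases h2 : IsSquare (a - 1)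
  · obtain ⟨x, hx⟩ := h2
    exact ⟨x, Or.inr (Or.inl (by rw [sq, ← hx]; ring))⟩
  have ha : a ≠ 0 := fun h => h1 (h ▸ IsSquare.zero)
  have ha1 : a - 1 ≠ 0 := fun h => h2 (h ▸ IsSquare.zero)
  have hchar : ringChar (ZMod p) ≠ 2 := by
    rw [ZMod.ringChar_zmod_n]; exact hp
  have hs : IsSquare ((a - 1) / a) := by
    have hc1 : quadraticChar (ZMod p) (a - 1) = -1 :=
      (quadraticChar_neg_one_iff_not_isSquare).mpr h2
    have hc2 : quadraticChar (ZMod p) a = -1 :=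
      (quadraticChar_neg_one_iff_not_isSquare).mpr h1
    have hc3 : quadraticChar (ZMod p) a⁻¹ = -1 :=
      (quadraticChar_neg_one_iff_not_isSquare).mpr (fun h => h1 (isSquare_inv.mp h))
    have : quadraticChar (ZMod p) ((a - 1) / a) = 1 := by
      rw [div_eq_mul_inv, map_mul, hc1, hc3]; norm_num
    exact (quadraticChar_one_iff_isSquare (div_ne_zero ha1 ha)).mp this
  obtain ⟨x, hx⟩ := hs
  have hx2 : x ^ 2 = (a - 1) / a := by rw [sq, ← hx]
  refine ⟨x, Or.inr (Or.inr ⟨?_, ?_⟩)⟩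
  · rw [hx2]
    intro h
    have h' : a - 1 = a := (div_eq_one_iff_eq ha).mp h
    exact one_ne_zero (α := ZMod p) (by linear_combination -h')
  · rw [hx2]
    have h3 : 1 - (a - 1) / a = 1 / a := by field_simp; ring
    rw [h3, one_div_one_div]
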